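/- Let C be a closed subcategory of Mod-B with associated exact preradical r and a = r(B). The category of modules M with M·a = M is equivalent (in fact equal) to C, and the functor M ↦ M ⊗_B a from Mod-B to C, together with Hom_B(a, -) : C → Mod-B, forms an adjoint pair (M ⊗_B a ⊣ Hom_B(a,-)) with M ⊗_B a ≅ M·a naturally. -/
import Mathlib


/-!
Statement 16.  Let `C` be a closed subcategory of the category of (right) `B`-modules
with associated exact preradical `r` and `a = r B`.  The category of modules `M` with
`M·a = M` coincides with `C`, and the functor `M ↦ M ⊗_B a`, together with
`Hom_B(a, -) : C → Mod-B`, forms an adjoint pair with `M ⊗_B a ≅ M·a` naturally.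

Formalized for left modules (the mirror image).  Since Mathlib has no tensor product
over a noncommutative ring, the natural isomorphism `M ⊗_B a ≅ M·a` is expressed by
saying that the canonical map `a ⊗_ℤ M → M`, `x ⊗ m ↦ x • m`, has image `a•M` and
kernel exactly the balancing relations (so the induced map from the balanced tensor
product is an isomorphism onto `a•M`), and the adjunction is expressed via the
canonical bijections `Hom(a•M, M') ≅ Hom(M, Hom_B(a, M'))`.
-/

universe u

open DirectSum TensorProduct

structure ClosedSubcategory (B : Type u) [Ring B] : Type (u + 1) where
  Mem : ∀ (M : Type u) [AddCommGroup M] [Module B M], Prop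
  mem_congr : ∀ {M N : Type u} [AddCommGroup M] [Module B M] [AddCommGroup N] [Module B N],
    (M ≃ₗ[B] N) → Mem M → Mem N
  mem_submodule : ∀ {M : Type u} [AddCommGroup M] [Module B M] (N : Submodule B M),
    Mem M → Mem N
  mem_quotient : ∀ {M : Type u} [AddCommGroup M] [Module B M] (N : Submodule B M),
    Mem M → Mem (M ⧸ N)
  mem_directSum : ∀ {ι : Type u} (M : ι → Type u) [∀ i, AddCommGroup (M i)]
    [∀ i, Module B (M i)], (∀ i, Mem (M i)) → Mem (⨁ i, M i)

variable {B : Type u} [Ring B]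

/-- The submodule `a•M` of `M` (the mirror of `M·a` for right modules). -/
def idealSMul (a : Ideal B) (M : Type u) [AddCommGroup M]
    [Module B M] : Submodule B M :=
  Submodule.span B {z : M | ∃ x ∈ a, ∃ m : M, z = x • m}

/-- `Hom_B(a, M)` as a `B`-module, with action `(b • f) x = f (x * b)`. -/
def THom (a : Ideal B) (_h2 : ∀ x ∈ a, ∀ b : B, x * b ∈ a) (M : Type u) [AddCommGroup M]
    [Module B M] : Type u :=
  ↥a →ₗ[B] M

namespace THom

variable {a : Ideal B} {h2 : ∀ x ∈ a, ∀ b : B, x * b ∈ a} {M : Type u} [AddCommGroup M]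
  [Module B M]

instance : AddCommGroup (THom a h2 M) :=
  inferInstanceAs (AddCommGroup (↥a →ₗ[B] M))

/-- The underlying linear map. -/
def toLin (f : THom a h2 M) : ↥a →ₗ[B] M := f

theorem ext' {f g : THom a h2 M} (h : ∀ x : ↥a, f.toLin x = g.toLin x) : f = g :=
  LinearMap.ext h

def smulAux (b : B) (f : THom a h2 M) : THom a h2 M where
  toFun := fun x => f.toLin ⟨(x : B) * b, h2 x x.2 b⟩
  map_add' := by
    intro x y
    show f.toLin ⟨((x + y : ↥a) : B) * b, h2 _ (x + y).2 b⟩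
        = f.toLin ⟨(x : B) * b, h2 x x.2 b⟩ + f.toLin ⟨(y : B) * b, h2 y y.2 b⟩
    have h : (⟨((x + y : ↥a) : B) * b, h2 _ (x + y).2 b⟩ : ↥a)
        = ⟨(x : B) * b, h2 x x.2 b⟩ + ⟨(y : B) * b, h2 y y.2 b⟩ :=
      Subtype.ext (by simp [add_mul])
    rw [h, map_add]
  map_smul' := by
    intro c x
    show f.toLin ⟨((c • x : ↥a) : B) * b, h2 _ (c • x).2 b⟩
        = (RingHom.id B) c • f.toLin ⟨(x : B) * b, h2 x x.2 b⟩
    have h : (⟨((c • x : ↥a) : B) * b, h2 _ (c • x).2 b⟩ : ↥a)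
        = c • ⟨(x : B) * b, h2 x x.2 b⟩ :=
      Subtype.ext (by simp [mul_assoc, smul_eq_mul])
    rw [h, map_smul]
    rfl

instance : Module B (THom a h2 M) where
  smul := smulAux
  one_smul f := ext' fun x => by
    show f.toLin ⟨(x : B) * 1, _⟩ = f.toLin x
    congr 1
    exact Subtype.ext (by simp)
  mul_smul b c f := ext' fun x => by
    show f.toLin ⟨(x : B) * (b * c), _⟩ = f.toLin ⟨((x : B) * b) * c, _⟩
    congr 1
    exact Subtype.ext (by simp [mul_assoc])
  smul_zero b := ext' fun x => rfl
  smul_add b f g := ext' fun x => rfl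
  add_smul b c f := ext' fun x => by
    show f.toLin ⟨(x : B) * (b + c), _⟩ = f.toLin ⟨(x : B) * b, _⟩ + f.toLin ⟨(x : B) * c, _⟩
    have h : (⟨(x : B) * (b + c), h2 x x.2 (b + c)⟩ : ↥a)
        = ⟨(x : B) * b, h2 x x.2 b⟩ + ⟨(x : B) * c, h2 x x.2 c⟩ :=
      Subtype.ext (by simp [mul_add])
    rw [h, map_add]
  zero_smul f := ext' fun x => by
    show f.toLin ⟨(x : B) * 0, _⟩ = 0
    have h : (⟨(x : B) * 0, h2 x x.2 0⟩ : ↥a) = 0 := Subtype.ext (by simp)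
    rw [h, map_zero]

@[simp] theorem smul_apply (b : B) (f : THom a h2 M) (x : ↥a) :
    (b • f).toLin x = f.toLin ⟨(x : B) * b, h2 x x.2 b⟩ := rfl

end THom

section Aux
variable {B : Type u} [Ring B]

theorem ismul_le {a : Ideal B} {M : Type u} [AddCommGroup M] [Module B M]
    {Q : Submodule B M} (h : ∀ x ∈ a, ∀ m : M, x • m ∈ Q) : idealSMul a M ≤ Q := by
  rw [idealSMul, Submodule.span_le]
  rintro z ⟨x, hx, m, rfl⟩
  exact h x hx m

theorem smul_mem_ismul {a : Ideal B} {M : Type u} [AddCommGroup M] [Module B M]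
    {x : B} (hx : x ∈ a) (m : M) : x • m ∈ idealSMul a M :=
  Submodule.subset_span ⟨x, hx, m, rfl⟩

theorem map_ismul_le {a : Ideal B} {M N : Type u} [AddCommGroup M] [Module B M]
    [AddCommGroup N] [Module B N] (f : M →ₗ[B] N) :
    (idealSMul a M).map f ≤ idealSMul a N := by
  rw [idealSMul, Submodule.map_span, Submodule.span_le]
  rintro _ ⟨z, ⟨x, hx, m, rfl⟩, rfl⟩
  simpa using smul_mem_ismul hx (f m)

theorem map_ismul_surj {a : Ideal B} {M N : Type u} [AddCommGroup M] [Module B M]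
    [AddCommGroup N] [Module B N] (f : M →ₗ[B] N) (hf : Function.Surjective f) :
    (idealSMul a M).map f = idealSMul a N := by
  refine le_antisymm (map_ismul_le f) (ismul_le fun x hx n => ?_)
  obtain ⟨m, rfl⟩ := hf n
  exact ⟨x • m, smul_mem_ismul hx m, map_smul f x m⟩

theorem ext_on_ismul {a : Ideal B} {M M' : Type u} [AddCommGroup M] [Module B M]
    [AddCommGroup M'] [Module B M'] (g g' : ↥(idealSMul a M) →ₗ[B] M')
    (h : ∀ (x : B) (hx : x ∈ a) (m : M),
      g ⟨x • m, smul_mem_ismul hx m⟩ = g' ⟨x • m, smul_mem_ismul hx m⟩) : g = g' := by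
  ext ⟨w, hw⟩
  refine Submodule.span_induction
    (p := fun w hw => g ⟨w, hw⟩ = g' ⟨w, hw⟩) ?_ ?_ ?_ ?_ hw
  · rintro z ⟨x, hx, m, rfl⟩
    exact h x hx m
  · show g 0 = g' 0
    rw [map_zero, map_zero]
  · intro z w hz hw h1 h2
    show g (⟨z, hz⟩ + ⟨w, hw⟩) = g' (⟨z, hz⟩ + ⟨w, hw⟩)
    rw [map_add, map_add, h1, h2]
  · intro c z hz h1
    show g (c • ⟨z, hz⟩) = g' (c • ⟨z, hz⟩)
    rw [map_smul, map_smul, h1]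

end Aux
section Core
variable {B : Type u} [Ring B] (C : ClosedSubcategory B)
  (r : ∀ (M : Type u) [AddCommGroup M] [Module B M], Submodule B M)

theorem cmem_ismul (hmem : ∀ (M : Type u) [AddCommGroup M] [Module B M], C.Mem (r M))
    (M : Type u) [AddCommGroup M] [Module B M] :
    C.Mem ↥(idealSMul (r B) M) := by
  classical
  set a : Ideal B := r B with ha
  let f : (⨁ (_ : M), ↥a) →ₗ[B] M :=
    DirectSum.toModule B M M (fun m => (LinearMap.toSpanSingleton B M m).comp a.subtype)
  have hf : ∀ (i : M) (x : ↥a), f (DirectSum.lof B M (fun _ => ↥a) i x) = (x : B) • i := by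
    intro i x
    rw [DirectSum.toModule_lof]
    rfl
  have hrange : LinearMap.range f = idealSMul a M := by
    refine le_antisymm ?_ (ismul_le fun x hx m =>
      ⟨DirectSum.lof B M (fun _ => ↥a) m ⟨x, hx⟩, hf m ⟨x, hx⟩⟩)
    rintro _ ⟨y, rfl⟩
    induction y using DirectSum.induction_on with
    | zero => simpa using (idealSMul a M).zero_mem
    | of i x =>
        rw [← DirectSum.lof_eq_of B, hf]
        exact smul_mem_ismul x.2 i
    | add z w hz hw => rw [map_add]; exact (idealSMul a M).add_mem hz hw
  have hF : C.Mem (⨁ (_ : M), ↥a) := C.mem_directSum _ (fun _ => hmem B)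
  have hQ : C.Mem ((⨁ (_ : M), ↥a) ⧸ LinearMap.ker f) := C.mem_quotient _ hF
  have hR : C.Mem ↥(LinearMap.range f) := C.mem_congr f.quotKerEquivRange hQ
  rwa [hrange] at hR

theorem r_le_ismul
    (hexact : ∀ {M N : Type u} [AddCommGroup M] [Module B M] [AddCommGroup N] [Module B N]
      (f : M →ₗ[B] N), Function.Surjective f → (r M).map f = r N)
    (M : Type u) [AddCommGroup M] [Module B M] :
    r M ≤ idealSMul (r B) M := by
  classical
  let g : (⨁ (_ : M), B) →ₗ[B] M :=
    DirectSum.toModule B M M (fun m => LinearMap.toSpanSingleton B M m)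
  have hgl : ∀ (i : M) (b : B), g (DirectSum.lof B M (fun _ => B) i b) = b • i := by
    intro i b
    rw [DirectSum.toModule_lof]
    rfl
  have hg : Function.Surjective g := fun m =>
    ⟨DirectSum.lof B M (fun _ => B) m 1, by rw [hgl, one_smul]⟩
  have hcomp : ∀ y ∈ r (⨁ (_ : M), B), ∀ i : M, y i ∈ r B := by
    intro y hy i
    have hsurj : Function.Surjective (DirectSum.component B M (fun _ => B) i) := fun b =>
      ⟨DirectSum.lof B M (fun _ => B) i b, by simp⟩
    have h := hexact (DirectSum.component B M (fun _ => B) i) hsurj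
    rw [← h]
    exact ⟨y, hy, rfl⟩
  intro z hz
  rw [← hexact g hg] at hz
  obtain ⟨y, hy, rfl⟩ := hz
  rw [← DirectSum.sum_support_of y, map_sum]
  refine Submodule.sum_mem _ fun i _ => ?_
  rw [← DirectSum.lof_eq_of B, hgl]
  exact smul_mem_ismul (hcomp y hy i) i

theorem r_top_of_mem
    (hmax : ∀ (M : Type u) [AddCommGroup M] [Module B M] (N : Submodule B M),
      C.Mem N → N ≤ r M)
    {M : Type u} [AddCommGroup M] [Module B M] (hM : C.Mem M) : r M = ⊤ :=
  top_unique (hmax M ⊤ (C.mem_congr Submodule.topEquiv.symm hM))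

theorem r_eq_ismul (hmem : ∀ (M : Type u) [AddCommGroup M] [Module B M], C.Mem (r M))
    (hmax : ∀ (M : Type u) [AddCommGroup M] [Module B M] (N : Submodule B M),
      C.Mem N → N ≤ r M)
    (hexact : ∀ {M N : Type u} [AddCommGroup M] [Module B M] [AddCommGroup N] [Module B N]
      (f : M →ₗ[B] N), Function.Surjective f → (r M).map f = r N)
    (M : Type u) [AddCommGroup M] [Module B M] :
    r M = idealSMul (r B) M :=
  le_antisymm (r_le_ismul r hexact M) (hmax M _ (cmem_ismul C r hmem M))

theorem mem_iff_top (hmem : ∀ (M : Type u) [AddCommGroup M] [Module B M], C.Mem (r M))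
    (hmax : ∀ (M : Type u) [AddCommGroup M] [Module B M] (N : Submodule B M),
      C.Mem N → N ≤ r M)
    (hexact : ∀ {M N : Type u} [AddCommGroup M] [Module B M] [AddCommGroup N] [Module B N]
      (f : M →ₗ[B] N), Function.Surjective f → (r M).map f = r N)
    (M : Type u) [AddCommGroup M] [Module B M] :
    C.Mem M ↔ idealSMul (r B) M = ⊤ := by
  constructor
  · intro hM
    rw [← r_eq_ismul C r hmem hmax hexact M, r_top_of_mem C r hmax hM]
  · intro h
    have := cmem_ismul C r hmem M
    rw [h] at this
    exact C.mem_congr Submodule.topEquiv this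

theorem hered (hmem : ∀ (M : Type u) [AddCommGroup M] [Module B M], C.Mem (r M))
    (hmax : ∀ (M : Type u) [AddCommGroup M] [Module B M] (N : Submodule B M),
      C.Mem N → N ≤ r M)
    (M : Type u) [AddCommGroup M] [Module B M] (N : Submodule B M) :
    N ⊓ r M ≤ Submodule.map N.subtype (r ↥N) := by
  have h1 : C.Mem ↥(N ⊓ r M) :=
    C.mem_congr (Submodule.comapSubtypeEquivOfLe (inf_le_right : N ⊓ r M ≤ r M))
      (C.mem_submodule (Submodule.comap (r M).subtype (N ⊓ r M)) (hmem M))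
  have h2 : C.Mem ↥(Submodule.comap N.subtype (N ⊓ r M)) :=
    C.mem_congr (Submodule.comapSubtypeEquivOfLe (inf_le_left : N ⊓ r M ≤ N)).symm h1
  have h3 := Submodule.map_mono (f := N.subtype) (hmax ↥N _ h2)
  rw [Submodule.map_comap_subtype, ← inf_assoc, inf_idem] at h3
  exact h3

end Core
section Tensor
variable {B : Type u} [Ring B]

/-- B-module structure on the tensor product, acting on the left factor. -/
theorem smul_tmul_ideal (a : Ideal B) {M : Type u} [AddCommGroup M] [Module B M]
    (b : B) (x : ↥a) (m : M) : b • (x ⊗ₜ[ℤ] m) = (b • x) ⊗ₜ[ℤ] m :=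
  TensorProduct.smul_tmul' b x m

theorem mu_smul (a : Ideal B) {M : Type u} [AddCommGroup M] [Module B M]
    (μ : (↥a ⊗[ℤ] M) →ₗ[ℤ] M) (hμ : ∀ (x : ↥a) (m : M), μ (x ⊗ₜ m) = (x : B) • m)
    (b : B) (z : ↥a ⊗[ℤ] M) : μ (b • z) = b • μ z := by
  induction z using TensorProduct.induction_on with
  | zero => simp
  | tmul x m =>
      rw [smul_tmul_ideal, hμ, hμ, Submodule.coe_smul, smul_eq_mul, mul_smul]
  | add z w hz hw => rw [smul_add, map_add, map_add, hz, hw, smul_add]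

/-- The canonical map as a `B`-linear map. -/
def muB (a : Ideal B) {M : Type u} [AddCommGroup M] [Module B M]
    (μ : (↥a ⊗[ℤ] M) →ₗ[ℤ] M) (hμ : ∀ (x : ↥a) (m : M), μ (x ⊗ₜ m) = (x : B) • m) :
    (↥a ⊗[ℤ] M) →ₗ[B] M where
  toFun := μ
  map_add' := map_add μ
  map_smul' := mu_smul a μ hμ

theorem muB_range (a : Ideal B) {M : Type u} [AddCommGroup M] [Module B M]
    (μ : (↥a ⊗[ℤ] M) →ₗ[ℤ] M) (hμ : ∀ (x : ↥a) (m : M), μ (x ⊗ₜ m) = (x : B) • m) :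
    LinearMap.range (muB a μ hμ) = idealSMul a M := by
  refine le_antisymm ?_ (ismul_le fun x hx m => ⟨(⟨x, hx⟩ : ↥a) ⊗ₜ m, hμ _ _⟩)
  rintro _ ⟨z, rfl⟩
  show μ z ∈ idealSMul a M
  induction z using TensorProduct.induction_on with
  | zero => simpa using (idealSMul a M).zero_mem
  | tmul x m => rw [hμ]; exact smul_mem_ismul x.2 m
  | add z w hz hw => rw [map_add]; exact (idealSMul a M).add_mem hz hw

end Tensor
section TRel
variable {B : Type u} [Ring B]

def TRel (a : Ideal B) (M : Type u) [AddCommGroup M] [Module B M] : Set (↥a ⊗[ℤ] M) :=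
  {z : ↥a ⊗[ℤ] M | ∃ (x p : ↥a) (b : B) (m : M),
    (p : B) = (x : B) * b ∧ z = p ⊗ₜ m - x ⊗ₜ (b • m)}

variable {a : Ideal B} {M : Type u} [AddCommGroup M] [Module B M]

theorem rel_smul (c : B) {z : ↥a ⊗[ℤ] M} (hz : z ∈ TRel a M) : c • z ∈ TRel a M := by
  obtain ⟨x, p, b, m, hpb, rfl⟩ := hz
  refine ⟨c • x, c • p, b, m, ?_, ?_⟩
  · rw [Submodule.coe_smul, Submodule.coe_smul, hpb, smul_eq_mul, smul_eq_mul, mul_assoc]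
  · rw [smul_sub, smul_tmul_ideal, smul_tmul_ideal]

theorem span_rel_smul (c : B) {z : ↥a ⊗[ℤ] M} (hz : z ∈ Submodule.span ℤ (TRel a M)) :
    c • z ∈ Submodule.span ℤ (TRel a M) := by
  refine Submodule.span_induction (p := fun z _ => c • z ∈ Submodule.span ℤ (TRel a M))
    ?_ ?_ ?_ ?_ hz
  · intro z hzr
    exact Submodule.subset_span (rel_smul c hzr)
  · show c • (0 : ↥a ⊗[ℤ] M) ∈ _
    rw [smul_zero]; exact Submodule.zero_mem _
  · intro z w _ _ h1 h2
    show c • (z + w) ∈ _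
    rw [smul_add]; exact Submodule.add_mem _ h1 h2
  · intro n z _ h1
    show c • (n • z) ∈ _
    rw [smul_comm]
    exact Submodule.smul_mem _ n h1

/-- `TRel` spans the same over `B` as over `ℤ`. -/
theorem spanB_rel_le (z : ↥a ⊗[ℤ] M) (hz : z ∈ Submodule.span B (TRel a M)) :
    z ∈ Submodule.span ℤ (TRel a M) := by
  refine Submodule.span_induction (p := fun z _ => z ∈ Submodule.span ℤ (TRel a M))
    ?_ ?_ ?_ ?_ hz
  · exact fun z hzr => Submodule.subset_span hzr
  · exact Submodule.zero_mem _
  · exact fun z w _ _ h1 h2 => Submodule.add_mem _ h1 h2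
  · exact fun c z _ h1 => span_rel_smul c h1

theorem span_rel_le_ker (μ : (↥a ⊗[ℤ] M) →ₗ[ℤ] M)
    (hμ : ∀ (x : ↥a) (m : M), μ (x ⊗ₜ m) = (x : B) • m) :
    Submodule.span ℤ (TRel a M) ≤ LinearMap.ker μ := by
  rw [Submodule.span_le]
  rintro _ ⟨x, p, b, m, hpb, rfl⟩
  simp only [SetLike.mem_coe, LinearMap.mem_ker, map_sub, hμ, hpb, mul_smul, sub_self]

theorem step1 (μ : (↥a ⊗[ℤ] M) →ₗ[ℤ] M)
    (hμ : ∀ (x : ↥a) (m : M), μ (x ⊗ₜ m) = (x : B) • m)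
    (x : ↥a) (z : ↥a ⊗[ℤ] M) :
    (x : B) • z - x ⊗ₜ (μ z) ∈ Submodule.span ℤ (TRel a M) := by
  induction z using TensorProduct.induction_on with
  | zero => rw [smul_zero, map_zero, TensorProduct.tmul_zero, sub_zero]; exact Submodule.zero_mem _
  | tmul y m =>
      rw [smul_tmul_ideal, hμ]
      exact Submodule.subset_span
        ⟨x, (x : B) • y, (y : B), m, by rw [Submodule.coe_smul, smul_eq_mul], rfl⟩
  | add z w hz hw =>
      rw [smul_add, map_add, TensorProduct.tmul_add]
      have := Submodule.add_mem _ hz hw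
      convert this using 1
      abel

end TRel
section Ker
variable {B : Type u} [Ring B]

theorem ker_le_span (C : ClosedSubcategory B)
    (r : ∀ (M : Type u) [AddCommGroup M] [Module B M], Submodule B M)
    (hmem : ∀ (M : Type u) [AddCommGroup M] [Module B M], C.Mem (r M))
    (hmax : ∀ (M : Type u) [AddCommGroup M] [Module B M] (N : Submodule B M),
      C.Mem N → N ≤ r M)
    (hexact : ∀ {M N : Type u} [AddCommGroup M] [Module B M] [AddCommGroup N] [Module B N]
      (f : M →ₗ[B] N), Function.Surjective f → (r M).map f = r N)
    (M : Type u) [AddCommGroup M] [Module B M]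
    (μ : (↥(r B) ⊗[ℤ] M) →ₗ[ℤ] M)
    (hμ : ∀ (x : ↥(r B)) (m : M), μ (x ⊗ₜ m) = (x : B) • m) :
    LinearMap.ker μ ≤ Submodule.span ℤ (TRel (r B) M) := by
  classical
  set RB : Submodule B (↥(r B) ⊗[ℤ] M) := Submodule.span B (TRel (r B) M) with hRBdef
  have hZB : Submodule.span ℤ (TRel (r B) M) ≤ RB.restrictScalars ℤ :=
    Submodule.span_le.2 Submodule.subset_span
  have haa : idealSMul (r B) ↥(r B) = ⊤ := (mem_iff_top C r hmem hmax hexact ↥(r B)).1 (hmem B)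
  have haG : idealSMul (r B) (↥(r B) ⊗[ℤ] M) = ⊤ := by
    rw [eq_top_iff]
    rintro z -
    induction z using TensorProduct.induction_on with
    | zero => exact Submodule.zero_mem _
    | tmul x m =>
        exact map_ismul_le
          ({ toFun := fun y => y ⊗ₜ m
             map_add' := fun y z => TensorProduct.add_tmul y z m
             map_smul' := fun c y => (smul_tmul_ideal (r B) c y m).symm } :
            ↥(r B) →ₗ[B] ↥(r B) ⊗[ℤ] M)
          ⟨x, haa ▸ Submodule.mem_top, rfl⟩
    | add z w hz hw => exact Submodule.add_mem _ hz hw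
  have haT : idealSMul (r B) ((↥(r B) ⊗[ℤ] M) ⧸ RB) = ⊤ := by
    rw [← map_ismul_surj RB.mkQ (Submodule.mkQ_surjective RB), haG, Submodule.map_top]
    exact Submodule.range_mkQ RB
  set Kbar : Submodule B ((↥(r B) ⊗[ℤ] M) ⧸ RB) :=
    Submodule.map RB.mkQ (LinearMap.ker (muB (r B) μ hμ)) with hKdef
  intro k hk
  have hk' : k ∈ LinearMap.ker (muB (r B) μ hμ) := hk
  have h1 : RB.mkQ k ∈ Kbar := ⟨k, hk', rfl⟩
  have h2 : RB.mkQ k ∈ Kbar ⊓ r ((↥(r B) ⊗[ℤ] M) ⧸ RB) :=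
    ⟨h1, by
      rw [r_eq_ismul C r hmem hmax hexact ((↥(r B) ⊗[ℤ] M) ⧸ RB), haT]
      exact Submodule.mem_top⟩
  have h3 := hered C r hmem hmax ((↥(r B) ⊗[ℤ] M) ⧸ RB) Kbar h2
  rw [r_eq_ismul C r hmem hmax hexact ↥Kbar] at h3
  have h4 : Submodule.map Kbar.subtype (idealSMul (r B) ↥Kbar) ≤ ⊥ := by
    rw [idealSMul, Submodule.map_span, Submodule.span_le]
    rintro _ ⟨_, ⟨x, hx, u, rfl⟩, rfl⟩
    obtain ⟨k', hk'', hπ⟩ := u.2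
    have h5 : x • k' ∈ RB := by
      have h6 := step1 μ hμ ⟨x, hx⟩ k'
      rw [show μ k' = 0 from hk'', TensorProduct.tmul_zero, sub_zero] at h6
      exact hZB h6
    have h7 : RB.mkQ (x • k') = 0 := by
      rwa [← LinearMap.mem_ker, Submodule.ker_mkQ]
    rw [SetLike.mem_coe, Submodule.mem_bot]
    show x • (u : (↥(r B) ⊗[ℤ] M) ⧸ RB) = 0
    rw [← hπ, ← map_smul, h7]
  have h8 : RB.mkQ k = 0 := by
    have := h4 h3
    rwa [Submodule.mem_bot] at this
  have h9 : k ∈ RB := by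
    rwa [← Submodule.ker_mkQ RB, LinearMap.mem_ker]
  exact spanB_rel_le k h9

theorem ker_eq_span (C : ClosedSubcategory B)
    (r : ∀ (M : Type u) [AddCommGroup M] [Module B M], Submodule B M)
    (hmem : ∀ (M : Type u) [AddCommGroup M] [Module B M], C.Mem (r M))
    (hmax : ∀ (M : Type u) [AddCommGroup M] [Module B M] (N : Submodule B M),
      C.Mem N → N ≤ r M)
    (hexact : ∀ {M N : Type u} [AddCommGroup M] [Module B M] [AddCommGroup N] [Module B N]
      (f : M →ₗ[B] N), Function.Surjective f → (r M).map f = r N)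
    (M : Type u) [AddCommGroup M] [Module B M]
    (μ : (↥(r B) ⊗[ℤ] M) →ₗ[ℤ] M)
    (hμ : ∀ (x : ↥(r B)) (m : M), μ (x ⊗ₜ m) = (x : B) • m) :
    LinearMap.ker μ = Submodule.span ℤ (TRel (r B) M) :=
  le_antisymm (ker_le_span C r hmem hmax hexact M μ hμ) (span_rel_le_ker μ hμ)

end Ker
section Adj
variable {B : Type u} [Ring B]

/-- The canonical bilinear pairing `a × M → M`. -/
noncomputable def mu0 (a : Ideal B) (M : Type u) [AddCommGroup M] [Module B M] :
    (↥a ⊗[ℤ] M) →ₗ[ℤ] M :=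
  TensorProduct.lift
    { toFun := fun x =>
        { toFun := fun m => (x : B) • m
          map_add' := fun m m' => smul_add _ m m'
          map_smul' := fun n m => smul_comm ((x : B)) n m }
      map_add' := fun x y => LinearMap.ext fun m => by
        show ((x : B) + (y : B)) • m = (x : B) • m + (y : B) • m
        rw [add_smul]
      map_smul' := fun n x => LinearMap.ext fun m => by
        show ((n • x : ↥a) : B) • m = n • ((x : B) • m)
        rw [AddSubgroupClass.coe_zsmul, smul_assoc] }

theorem mu0_tmul (a : Ideal B) {M : Type u} [AddCommGroup M] [Module B M]
    (x : ↥a) (m : M) : mu0 a M (x ⊗ₜ m) = (x : B) • m := rfl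

theorem adjunction (a : Ideal B) (h2 : ∀ x ∈ a, ∀ b : B, x * b ∈ a)
    (M M' : Type u) [AddCommGroup M] [Module B M] [AddCommGroup M'] [Module B M']
    (hker : LinearMap.ker (mu0 a M) = Submodule.span ℤ (TRel a M)) :
    ∃ e : (↥(idealSMul a M) →ₗ[B] M') ≃ (M →ₗ[B] THom a h2 M'),
      ∀ (g : ↥(idealSMul a M) →ₗ[B] M') (m : M) (x : ↥a),
        ((e g) m).toLin x =
          g ⟨(x : B) • m, Submodule.subset_span ⟨(x : B), x.2, m, rfl⟩⟩ := by
  classical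
  -- the forward map
  let Phi : (↥(idealSMul a M) →ₗ[B] M') → (M →ₗ[B] THom a h2 M') := fun g =>
    { toFun := fun m =>
        ({ toFun := fun x => g ⟨(x : B) • m, smul_mem_ismul x.2 m⟩
           map_add' := fun x y => by
             show g ⟨((x + y : ↥a) : B) • m, smul_mem_ismul (x + y).2 m⟩ =
               g ⟨(x : B) • m, smul_mem_ismul x.2 m⟩ + g ⟨(y : B) • m, smul_mem_ismul y.2 m⟩
             rw [show (⟨((x + y : ↥a) : B) • m, smul_mem_ismul (x + y).2 m⟩ :
                 ↥(idealSMul a M)) = ⟨(x : B) • m, smul_mem_ismul x.2 m⟩ +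
                   ⟨(y : B) • m, smul_mem_ismul y.2 m⟩ from
               Subtype.ext (by
                 show ((x : B) + (y : B)) • m = (x : B) • m + (y : B) • m
                 rw [add_smul]), map_add]
           map_smul' := fun c x => by
             show g ⟨((c • x : ↥a) : B) • m, smul_mem_ismul (c • x).2 m⟩ =
               c • g ⟨(x : B) • m, smul_mem_ismul x.2 m⟩
             rw [show (⟨((c • x : ↥a) : B) • m, smul_mem_ismul (c • x).2 m⟩ :
                 ↥(idealSMul a M)) = c • ⟨(x : B) • m, smul_mem_ismul x.2 m⟩ from
               Subtype.ext (by
                 show (c * (x : B)) • m = c • ((x : B) • m)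
                 rw [mul_smul]), map_smul]
         } : THom a h2 M')
      map_add' := fun m m' => THom.ext' fun x => by
        show g ⟨(x : B) • (m + m'), smul_mem_ismul x.2 (m + m')⟩ =
          g ⟨(x : B) • m, smul_mem_ismul x.2 m⟩ + g ⟨(x : B) • m', smul_mem_ismul x.2 m'⟩
        rw [show (⟨(x : B) • (m + m'), smul_mem_ismul x.2 (m + m')⟩ :
            ↥(idealSMul a M)) = ⟨(x : B) • m, smul_mem_ismul x.2 m⟩ +
              ⟨(x : B) • m', smul_mem_ismul x.2 m'⟩ from
          Subtype.ext (by
            show (x : B) • (m + m') = (x : B) • m + (x : B) • m'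
            rw [smul_add]), map_add]
      map_smul' := fun b m => THom.ext' fun x => by
        show g ⟨(x : B) • (b • m), smul_mem_ismul x.2 (b • m)⟩ =
          g ⟨((x : B) * b) • m, smul_mem_ismul (h2 x x.2 b) m⟩
        congr 1
        exact Subtype.ext (by
          show (x : B) • (b • m) = ((x : B) * b) • m
          rw [mul_smul]) }
  -- the backward map
  let mkgZ : (M →ₗ[B] THom a h2 M') → ((↥a ⊗[ℤ] M) →ₗ[ℤ] M') := fun φ =>
    TensorProduct.lift
      { toFun := fun x =>
          { toFun := fun m => (φ m).toLin x
            map_add' := fun m m' => by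
              show (φ (m + m')).toLin x = (φ m).toLin x + (φ m').toLin x
              rw [map_add]; rfl
            map_smul' := fun n m => by
              show (φ (n • m)).toLin x = n • (φ m).toLin x
              rw [map_zsmul]; rfl }
        map_add' := fun x y => LinearMap.ext fun m => by
          show (φ m).toLin (x + y) = (φ m).toLin x + (φ m).toLin y
          rw [map_add]
        map_smul' := fun n x => LinearMap.ext fun m => by
          show (φ m).toLin (n • x) = n • (φ m).toLin x
          rw [map_zsmul] }
  have hgZ : ∀ (φ : M →ₗ[B] THom a h2 M') (x : ↥a) (m : M),
      mkgZ φ (x ⊗ₜ m) = (φ m).toLin x := fun φ x m => TensorProduct.lift.tmul x m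
  let mkgB : (M →ₗ[B] THom a h2 M') → ((↥a ⊗[ℤ] M) →ₗ[B] M') := fun φ =>
    { toFun := mkgZ φ
      map_add' := map_add (mkgZ φ)
      map_smul' := by
        intro b z
        induction z using TensorProduct.induction_on with
        | zero => simp
        | tmul x m =>
            show mkgZ φ ((b • x) ⊗ₜ m) = b • mkgZ φ (x ⊗ₜ m)
            rw [hgZ, hgZ, map_smul]
        | add z w hz hw =>
            show mkgZ φ (b • (z + w)) = b • mkgZ φ (z + w)
            rw [smul_add, map_add, map_add, smul_add]
            exact congrArg₂ (· + ·) hz hw }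
  have hkerle : ∀ (φ : M →ₗ[B] THom a h2 M'),
      LinearMap.ker (muB a (mu0 a M) (mu0_tmul a)) ≤ LinearMap.ker (mkgB φ) := by
    intro φ z hz
    have hz' : z ∈ Submodule.span ℤ (TRel a M) := by
      rw [← hker]
      exact hz
    have hspan : Submodule.span ℤ (TRel a M) ≤ LinearMap.ker (mkgZ φ) := by
      rw [Submodule.span_le]
      rintro _ ⟨x, p, b, m, hpb, rfl⟩
      have h1 : (φ (b • m)).toLin x = (φ m).toLin p := by
        rw [map_smul]
        show (φ m).toLin ⟨(x : B) * b, h2 x x.2 b⟩ = (φ m).toLin p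
        congr 1
        exact Subtype.ext hpb.symm
      simp only [SetLike.mem_coe, LinearMap.mem_ker, map_sub, hgZ, h1, sub_self]
    exact hspan hz'
  let E : ↥(idealSMul a M) ≃ₗ[B] ((↥a ⊗[ℤ] M) ⧸ LinearMap.ker (muB a (mu0 a M) (mu0_tmul a))) :=
    (LinearEquiv.ofEq _ _ (muB_range a (mu0 a M) (mu0_tmul a)).symm).trans
      (LinearMap.quotKerEquivRange (muB a (mu0 a M) (mu0_tmul a))).symm
  let Psi : (M →ₗ[B] THom a h2 M') → (↥(idealSMul a M) →ₗ[B] M') := fun φ =>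
    (Submodule.liftQ _ (mkgB φ) (hkerle φ)).comp E.toLinearMap
  have key : ∀ (φ : M →ₗ[B] THom a h2 M') (x : ↥a) (m : M),
      Psi φ ⟨(x : B) • m, smul_mem_ismul x.2 m⟩ = (φ m).toLin x := by
    intro φ x m
    have hE : E ⟨(x : B) • m, smul_mem_ismul x.2 m⟩ = Submodule.Quotient.mk (x ⊗ₜ m) := by
      show ((LinearMap.quotKerEquivRange (muB a (mu0 a M) (mu0_tmul a))).symm)
        ((LinearEquiv.ofEq _ _ (muB_range a (mu0 a M) (mu0_tmul a)).symm)
          ⟨(x : B) • m, smul_mem_ismul x.2 m⟩) = Submodule.Quotient.mk (x ⊗ₜ m)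
      rw [LinearEquiv.symm_apply_eq]
      refine Subtype.ext ?_
      rw [LinearEquiv.coe_ofEq_apply, LinearMap.quotKerEquivRange_apply_mk]
      exact (mu0_tmul a x m).symm
    have h0 : Psi φ ⟨(x : B) • m, smul_mem_ismul x.2 m⟩ =
        Submodule.liftQ _ (mkgB φ) (hkerle φ) (E ⟨(x : B) • m, smul_mem_ismul x.2 m⟩) := rfl
    rw [h0, hE, Submodule.liftQ_apply]
    exact hgZ φ x m
  refine ⟨⟨Phi, Psi, ?_, ?_⟩, ?_⟩
  · intro g
    refine ext_on_ismul _ _ fun x hx m => ?_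
    exact key (Phi g) ⟨x, hx⟩ m
  · intro φ
    refine LinearMap.ext fun m => THom.ext' fun x => ?_
    exact key φ x m
  · intro g m x
    rfl

end Adj
theorem stmt16 (C : ClosedSubcategory B)
    (r : ∀ (M : Type u) [AddCommGroup M] [Module B M], Submodule B M)
    (hmem : ∀ (M : Type u) [AddCommGroup M] [Module B M], C.Mem (r M))
    (hmax : ∀ (M : Type u) [AddCommGroup M] [Module B M] (N : Submodule B M),
      C.Mem N → N ≤ r M)
    (hexact : ∀ {M N : Type u} [AddCommGroup M] [Module B M] [AddCommGroup N] [Module B N]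
      (f : M →ₗ[B] N), Function.Surjective f → (r M).map f = r N)
    -- (automatic) two-sidedness of `a = r B`:
    (h2 : ∀ x ∈ r B, ∀ b : B, x * b ∈ r B) :
    -- (1) `C` is exactly the class of modules with `M·a = M`:
    (∀ (M : Type u) [AddCommGroup M] [Module B M],
        C.Mem M ↔ idealSMul (r B) M = ⊤) ∧
    -- (2) the canonical map `a ⊗_B M → M` is an isomorphism onto `a•M`, i.e. the map
    -- `a ⊗_ℤ M → M` has image `a•M` and kernel the balancing relations:
    (∀ (M : Type u) [AddCommGroup M] [Module B M]
        (μ : (↥(r B) ⊗[ℤ] M) →ₗ[ℤ] M),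
        (∀ (x : ↥(r B)) (m : M), μ (x ⊗ₜ m) = (x : B) • m) →
          Set.range μ = (idealSMul (r B) M : Set M) ∧
            LinearMap.ker μ =
              Submodule.span ℤ
                {z : ↥(r B) ⊗[ℤ] M | ∃ (x p : ↥(r B)) (b : B) (m : M),
                  (p : B) = (x : B) * b ∧ z = p ⊗ₜ m - x ⊗ₜ (b • m)}) ∧
    -- (3) the adjunction `(-·a) ⊣ Hom_B(a, -)`, via the canonical natural bijections:
    (∀ (M : Type u) [AddCommGroup M] [Module B M] (M' : Type u) [AddCommGroup M']
        [Module B M'], C.Mem M' →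
        ∃ e : (↥(idealSMul (r B) M) →ₗ[B] M') ≃ (M →ₗ[B] THom (r B) h2 M'),
          ∀ (g : ↥(idealSMul (r B) M) →ₗ[B] M') (m : M) (x : ↥(r B)),
            ((e g) m).toLin x =
              g ⟨(x : B) • m, Submodule.subset_span ⟨(x : B), x.2, m, rfl⟩⟩) := by
  refine ⟨fun M _ _ => mem_iff_top C r hmem hmax hexact M, ?_, ?_⟩
  · intro M _ _ μ hμ
    refine ⟨?_, ker_eq_span C r hmem hmax hexact M μ hμ⟩
    rw [← muB_range (r B) μ hμ]
    rfl
  · intro M _ _ M' _ _ _hM'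
    exact adjunction (r B) h2 M M'
      (ker_eq_span C r hmem hmax hexact M (mu0 (r B) M) (mu0_tmul (r B)))
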